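/- Let ρ:(0,∞)→(0,∞) be strictly monotone and C¹, and define f(x) = (x/|x|)ρ(|x|) for x ≠ 0 on ℝⁿ. Then for almost every x ≠ 0, the operator norm of the derivative satisfies |Df(x)| = max{ρ(|x|)/|x|, |ρ'(|x|)|} and the Jacobian determinant satisfies J_f(x) = ρ'(|x|)·(ρ(|x|)/|x|)^{n-1}. -/

import Mathlib

open MeasureTheory Set

local notation "⟪" x ", " y "⟫" => @inner ℝ _ _ x y

private lemma aux_hasFDerivAt_norm {E : Type*} [NormedAddCommGroup E] [InnerProductSpace ℝ E]
    {x : E} (hx : x ≠ 0) :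
    HasFDerivAt (fun y : E => ‖y‖) (‖x‖⁻¹ • innerSL ℝ x) x := by
  have hr : (0:ℝ) < ‖x‖ := norm_pos_iff.2 hx
  have h1 : HasFDerivAt (fun y : E => ‖y‖ ^ 2) (2 • innerSL ℝ x) x :=
    (hasStrictFDerivAt_norm_sq x).hasFDerivAt
  have h2 : HasDerivAt Real.sqrt (1 / (2 * ‖x‖)) (‖x‖ ^ 2) := by
    have := Real.hasDerivAt_sqrt (x := ‖x‖ ^ 2) (by positivity)
    rwa [Real.sqrt_sq (norm_nonneg x)] at this
  have h3 := h2.comp_hasFDerivAt x h1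
  rw [show Real.sqrt ∘ (fun y : E => ‖y‖ ^ 2) = fun y : E => ‖y‖ from
    funext fun y => Real.sqrt_sq (norm_nonneg y)] at h3
  refine h3.congr_fderiv ?_
  ext v
  simp only [ContinuousLinearMap.coe_smul', Pi.smul_apply, ContinuousLinearMap.smul_apply,
    two_smul]
  field_simp
  rw [ContinuousLinearMap.add_apply]; ring

private lemma aux_radial_hasFDerivAt {E : Type*} [NormedAddCommGroup E] [InnerProductSpace ℝ E]
    {ρ : ℝ → ℝ} {x : E} (hx : x ≠ 0)
    (hρ : HasDerivAt ρ (deriv ρ ‖x‖) ‖x‖)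
    {f : E → E} (hf : ∀ y : E, y ≠ 0 → f y = (ρ ‖y‖ / ‖y‖) • y) :
    HasFDerivAt f ((ρ ‖x‖ * ‖x‖⁻¹) • ContinuousLinearMap.id ℝ E +
      ((deriv ρ ‖x‖ * ‖x‖⁻¹ + ρ ‖x‖ * (-(‖x‖ ^ 2)⁻¹)) • (‖x‖⁻¹ • innerSL ℝ x)).smulRight x)
      x := by
  have hr : (0:ℝ) < ‖x‖ := norm_pos_iff.2 hx
  have hinv : HasDerivAt (fun t : ℝ => t⁻¹) (-(‖x‖ ^ 2)⁻¹) ‖x‖ := hasDerivAt_inv hr.ne'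
  have hh : HasDerivAt (fun t : ℝ => ρ t * t⁻¹)
      (deriv ρ ‖x‖ * ‖x‖⁻¹ + ρ ‖x‖ * (-(‖x‖ ^ 2)⁻¹)) ‖x‖ := hρ.mul hinv
  have hc := hh.comp_hasFDerivAt x (aux_hasFDerivAt_norm hx)
  have hg := hc.smul (hasFDerivAt_id x)
  have heq : f =ᶠ[nhds x] fun y => ((fun t : ℝ => ρ t * t⁻¹) ∘ fun y : E => ‖y‖) y • y := by
    filter_upwards [IsOpen.mem_nhds isOpen_compl_singleton hx] with y hy
    rw [hf y hy, div_eq_mul_inv]; rfl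
  exact hg.congr_of_eventuallyEq heq

/-- For a radial map `f(x) = (x/|x|)·ρ(|x|)` with `ρ` strictly monotone and `C¹` on `(0,∞)`,
for a.e. `x ≠ 0` the operator norm of the derivative is `max{ρ(|x|)/|x|, |ρ'(|x|)|}` and the
Jacobian determinant is `ρ'(|x|)·(ρ(|x|)/|x|)^{n-1}`. -/
theorem stmt0 (n : ℕ) (hn : 2 ≤ n) (ρ : ℝ → ℝ)
    (hρpos : ∀ r ∈ Set.Ioi (0 : ℝ), 0 < ρ r)
    (hρmono : StrictMonoOn ρ (Set.Ioi 0) ∨ StrictAntiOn ρ (Set.Ioi 0))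
    (hρC1 : ContDiffOn ℝ 1 ρ (Set.Ioi 0))
    (f : EuclideanSpace ℝ (Fin n) → EuclideanSpace ℝ (Fin n))
    (hf : ∀ x : EuclideanSpace ℝ (Fin n), x ≠ 0 → f x = (ρ ‖x‖ / ‖x‖) • x) :
    ∀ᵐ x : EuclideanSpace ℝ (Fin n) ∂volume, x ≠ 0 →
      DifferentiableAt ℝ f x ∧
      ‖fderiv ℝ f x‖ = max (ρ ‖x‖ / ‖x‖) |deriv ρ ‖x‖| ∧
      LinearMap.det (fderiv ℝ f x).toLinearMap = deriv ρ ‖x‖ * (ρ ‖x‖ / ‖x‖) ^ (n - 1) := by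
  refine ae_of_all _ fun x hx => ?_
  have hr : (0:ℝ) < ‖x‖ := norm_pos_iff.2 hx
  set r : ℝ := ‖x‖ with hrdef
  set a : ℝ := ρ r * r⁻¹ with hadef
  set b : ℝ := deriv ρ r with hbdef
  have ha_pos : 0 < a := mul_pos (hρpos r hr) (inv_pos.2 hr)
  have hρd : HasDerivAt ρ b r :=
    ((hρC1.contDiffAt (Ioi_mem_nhds hr)).differentiableAt one_ne_zero).hasDerivAt
  set h' : ℝ := b * r⁻¹ + ρ r * (-(r ^ 2)⁻¹) with hh'def
  set D := a • ContinuousLinearMap.id ℝ (EuclideanSpace ℝ (Fin n)) +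
      (h' • (r⁻¹ • innerSL ℝ x)).smulRight x with hDdef
  have hfd : HasFDerivAt f D x := aux_radial_hasFDerivAt hx hρd hf
  have hfx : fderiv ℝ f x = D := hfd.fderiv
  have hDapp : ∀ v, D v = a • v + (h' * (r⁻¹ * ⟪x, v⟫)) • x := by
    intro v
    simp [hDdef, mul_assoc, smul_smul]
  have hxx : ⟪x, x⟫ = r ^ 2 := real_inner_self_eq_norm_sq x
  -- action on x and on vectors orthogonal to x
  have hDx : D x = b • x := by
    rw [hDapp, hxx, ← add_smul]
    congr 1
    rw [hadef, hh'def]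
    field_simp
    ring
  have hDperp : ∀ v, ⟪x, v⟫ = 0 → D v = a • v := by
    intro v hv
    rw [hDapp, hv]
    simp
  -- the unit radial vector
  set u : EuclideanSpace ℝ (Fin n) := r⁻¹ • x with hudef
  have hnu : ‖u‖ = 1 := by
    rw [hudef, norm_smul, Real.norm_eq_abs, abs_of_pos (inv_pos.2 hr)]
    exact inv_mul_cancel₀ hr.ne'
  have hDu : D u = b • u := by
    rw [hudef, D.map_smul, hDx, smul_comm]
  -- orthonormal basis with first vector u
  set i0 : Fin n := ⟨0, by omega⟩ with hi0
  have hcard : Module.finrank ℝ (EuclideanSpace ℝ (Fin n)) = Fintype.card (Fin n) := by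
    simp [finrank_euclideanSpace]
  have horth : Orthonormal ℝ (Set.restrict {i0} (fun _ => u)) := by
    constructor
    · intro i; exact hnu
    · intro i j hij
      exact absurd (Subtype.ext ((i.2 : (i:Fin n) ∈ ({i0}:Set (Fin n))).trans
        (j.2 : (j:Fin n) ∈ ({i0}:Set (Fin n))).symm)) hij
  obtain ⟨bB, hbB⟩ := horth.exists_orthonormalBasis_extension_of_card_eq hcard
  have hbB0 : bB i0 = u := hbB i0 rfl
  set d : Fin n → ℝ := fun i => if i = i0 then b else a with hddef
  have hd0 : d i0 = b := by simp [hddef]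
  have hdne : ∀ i, i ≠ i0 → d i = a := fun i hi => by simp [hddef, hi]
  have hperp : ∀ i, i ≠ i0 → ⟪x, bB i⟫ = 0 := by
    intro i hi
    have h0 : ⟪bB i0, bB i⟫ = 0 := bB.orthonormal.2 (Ne.symm hi)
    rw [hbB0, hudef, real_inner_smul_left] at h0
    rcases mul_eq_zero.1 h0 with h | h
    · exact absurd h (inv_ne_zero hr.ne')
    · exact h
  have hDiag : ∀ i, D (bB i) = d i • bB i := by
    intro i
    by_cases h : i = i0
    · rw [h, hbB0, hDu, hd0]
    · rw [hDperp _ (hperp i h), hdne i h]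
  -- representation of D v in the basis
  have hrep : ∀ (v : EuclideanSpace ℝ (Fin n)) i, bB.repr (D v) i = d i * bB.repr v i := by
    intro v i
    rw [bB.repr_apply_apply, bB.repr_apply_apply, hDapp]
    rw [inner_add_right, real_inner_smul_right, real_inner_smul_right]
    by_cases h : i = i0
    · subst h
      rw [hbB0, hd0]
      have h1 : ⟪u, x⟫ = r := by
        rw [hudef, real_inner_smul_left, hxx]; field_simp
      have h2 : ⟪u, v⟫ = r⁻¹ * ⟪x, v⟫ := by rw [hudef, real_inner_smul_left]
      rw [h1, h2, hh'def, hadef, hbdef]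
      field_simp
      ring
    · have h1 : ⟪bB i, x⟫ = 0 := by rw [real_inner_comm]; exact hperp i h
      rw [h1, hdne i h]
      ring
  -- operator norm
  have hM0 : 0 ≤ max a |b| := le_trans ha_pos.le (le_max_left _ _)
  have hub : ‖D‖ ≤ max a |b| := by
    refine ContinuousLinearMap.opNorm_le_bound _ hM0 fun v => ?_
    have e1 : ‖D v‖ = ‖bB.repr (D v)‖ := (bB.repr.norm_map (D v)).symm
    have e2 : ‖v‖ = ‖bB.repr v‖ := (bB.repr.norm_map v).symm
    rw [e1, e2, EuclideanSpace.norm_eq, EuclideanSpace.norm_eq]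
    rw [← Real.sqrt_sq hM0, ← Real.sqrt_mul (sq_nonneg _)]
    refine Real.sqrt_le_sqrt ?_
    rw [Finset.mul_sum]
    refine Finset.sum_le_sum fun i _ => ?_
    rw [hrep]
    have hdi : |d i| ≤ max a |b| := by
      by_cases h : i = i0
      · rw [h, hd0]; exact le_max_right a |b|
      · rw [hdne i h, abs_of_pos ha_pos]; exact le_max_left a |b|
    calc ‖d i * bB.repr v i‖ ^ 2 = (d i)^2 * ‖bB.repr v i‖^2 := by
            rw [norm_mul, mul_pow, Real.norm_eq_abs, sq_abs]
      _ ≤ (max a |b|)^2 * ‖bB.repr v i‖^2 := by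
            refine mul_le_mul_of_nonneg_right ?_ (sq_nonneg _)
            rw [← sq_abs (d i)]
            exact pow_le_pow_left₀ (abs_nonneg _) hdi 2
  have hlb1 : |b| ≤ ‖D‖ := by
    have h1 : ‖D u‖ = |b| := by rw [hDu, norm_smul, hnu, mul_one]; rfl
    have h2 := D.le_opNorm u
    rw [h1, hnu, mul_one] at h2
    exact h2
  have hlb2 : a ≤ ‖D‖ := by
    set i1 : Fin n := ⟨1, by omega⟩ with hi1
    have hne : i1 ≠ i0 := by
      rw [hi1, hi0]; intro h; exact absurd (congrArg Fin.val h) one_ne_zero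
    have hn1 : ‖bB i1‖ = 1 := bB.orthonormal.1 i1
    have h1 : ‖D (bB i1)‖ = a := by
      rw [hDperp _ (hperp i1 hne), norm_smul, hn1, mul_one, Real.norm_eq_abs, abs_of_pos ha_pos]
    have h2 := D.le_opNorm (bB i1)
    rw [h1, hn1, mul_one] at h2
    exact h2
  have hnorm : ‖D‖ = max a |b| := le_antisymm hub (max_le hlb2 hlb1)
  -- determinant
  have hmat : LinearMap.toMatrix bB.toBasis bB.toBasis D.toLinearMap = Matrix.diagonal d := by
    ext i j
    rw [LinearMap.toMatrix_apply]
    simp only [OrthonormalBasis.coe_toBasis, ContinuousLinearMap.coe_coe]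
    rw [hDiag j, _root_.map_smul, Finsupp.smul_apply, ← bB.coe_toBasis, Module.Basis.repr_self]
    rcases eq_or_ne i j with h | h
    · subst h; simp [Matrix.diagonal_apply_eq, Finsupp.single_apply]
    · simp [Matrix.diagonal_apply_ne _ h, Finsupp.single_apply, Ne.symm h]
  have hdet : LinearMap.det D.toLinearMap = b * a ^ (n - 1) := by
    rw [← LinearMap.det_toMatrix bB.toBasis, hmat, Matrix.det_diagonal]
    rw [← Finset.mul_prod_erase _ _ (Finset.mem_univ i0), hd0]
    congr 1
    rw [Finset.prod_congr rfl (fun i hi => hdne i (Finset.ne_of_mem_erase hi)),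
      Finset.prod_const, Finset.card_erase_of_mem (Finset.mem_univ i0), Finset.card_univ,
      Fintype.card_fin]
  have hae : ρ r / r = a := div_eq_mul_inv _ _
  exact ⟨hfd.differentiableAt, by rw [hfx, hnorm, hae], by rw [hfx, hdet, hae]⟩
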